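/- Let α < 0 and let k ≥ 3 be an integer. Define T_0^{DB}(k) = (k+1)/(2k) + ((k−1)/2)(β/α), T_1^{DB}(k) = (k−1)(k+1)/(2k) + ((k−1)/2)(β/α), and T_{λ*}^{DB}(k) = (k+1)/(2k) + (1/k)(β/α). Then: (i) j_k^{DB}(0) > 0 if and only if x* > T_0^{DB}(k); (ii) j_k^{DB}(1) > 0 if and only if x* > T_1^{DB}(k); (iii) b_k^{DB} > 0 if and only if x* > T_{λ*}^{DB}(k), and consequently, if in addition γ + α > 0 and θ > 0, then λ*_{k,DB} < −(β+α)θ/(γ+α) if and only if x* > T_{λ*}^{DB}(k). -/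

import Mathlib

/-- The Ohtsuki–Nowak shift for death-birth updating on a `k`-regular graph. -/
noncomputable def bDB (α β γ : ℝ) (k : ℕ) : ℝ :=
  (α + 2 * β + (k : ℝ) * (γ + α)) / (((k : ℝ) + 1) * ((k : ℝ) - 2))

/-- Within-group selection gradient for DB updating on a `k`-regular graph. -/
noncomputable def jDB (α β γ : ℝ) (k : ℕ) (x : ℝ) : ℝ :=
  β + α * x + bDB α β γ k

/-- For PD games with `α < 0` and DB updating on a `k`-regular graph (`k ≥ 3`):
(i) the full-defector equilibrium is unstable (`j_k^{DB}(0) > 0`) iff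
`x* = γ/(-2α) > T_0^{DB}(k)`; (ii) the full-cooperator equilibrium is stable
(`j_k^{DB}(1) > 0`) iff `x* > T_1^{DB}(k)`; (iii) `b_k^{DB} > 0` iff
`x* > T_{λ*}^{DB}(k)`, and consequently, if `γ + α > 0` and `θ > 0`, the
multilevel threshold `λ*_{k,DB}` is below the well-mixed threshold
`-(β+α)θ/(γ+α)` iff `x* > T_{λ*}^{DB}(k)`. -/
theorem stmt7 (α β γ θ : ℝ) (hα : α < 0) (k : ℕ) (hk : 3 ≤ k) :
    (jDB α β γ k 0 > 0 ↔
      γ / (-2 * α) > ((k : ℝ) + 1) / (2 * (k : ℝ)) + (((k : ℝ) - 1) / 2) * (β / α)) ∧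
    (jDB α β γ k 1 > 0 ↔
      γ / (-2 * α) > ((k : ℝ) - 1) * ((k : ℝ) + 1) / (2 * (k : ℝ))
        + (((k : ℝ) - 1) / 2) * (β / α)) ∧
    (bDB α β γ k > 0 ↔
      γ / (-2 * α) > ((k : ℝ) + 1) / (2 * (k : ℝ)) + (1 / (k : ℝ)) * (β / α)) ∧
    (γ + α > 0 → θ > 0 →
      (-(β + α + bDB α β γ k) * θ / (γ + α) < -(β + α) * θ / (γ + α) ↔
        γ / (-2 * α) > ((k : ℝ) + 1) / (2 * (k : ℝ)) + (1 / (k : ℝ)) * (β / α))) := by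
  set K : ℝ := (k : ℝ) with hKdef
  have hK : (3:ℝ) ≤ K := by rw [hKdef]; exact_mod_cast hk
  have hK0 : (0:ℝ) < K := by linarith
  have hKne : K ≠ 0 := ne_of_gt hK0
  have hαne : α ≠ 0 := ne_of_lt hα
  have hD : 0 < (K + 1) * (K - 2) := by nlinarith
  have hDne : (K + 1) * (K - 2) ≠ 0 := ne_of_gt hD
  have hc : 0 < 2 * K * (-α) := by nlinarith
  have h1 : jDB α β γ k 0 > 0 ↔ 0 < β * K * (K - 1) + α * (K + 1) + K * γ := by
    have e : jDB α β γ k 0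
        = (β * K * (K - 1) + α * (K + 1) + K * γ) / ((K + 1) * (K - 2)) := by
      unfold jDB bDB
      rw [← hKdef]
      field_simp [show K - 2 ≠ 0 by linarith, show K + 1 ≠ 0 by linarith]
      ring
    rw [gt_iff_lt, e, lt_div_iff₀ hD, zero_mul]
  have h1' : γ / (-2 * α) > (K + 1) / (2 * K) + ((K - 1) / 2) * (β / α) ↔
      0 < β * K * (K - 1) + α * (K + 1) + K * γ := by
    have e : γ / (-2 * α) - ((K + 1) / (2 * K) + ((K - 1) / 2) * (β / α))
        = (β * K * (K - 1) + α * (K + 1) + K * γ) / (2 * K * (-α)) := by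
      field_simp
      ring
    rw [gt_iff_lt, ← sub_pos, e, lt_div_iff₀ hc, zero_mul]
  have h2 : jDB α β γ k 1 > 0 ↔ 0 < β * K * (K - 1) + α * (K - 1) * (K + 1) + K * γ := by
    have e : jDB α β γ k 1
        = (β * K * (K - 1) + α * (K - 1) * (K + 1) + K * γ) / ((K + 1) * (K - 2)) := by
      unfold jDB bDB
      rw [← hKdef]
      field_simp [show K - 2 ≠ 0 by linarith, show K + 1 ≠ 0 by linarith]
      ring
    rw [gt_iff_lt, e, lt_div_iff₀ hD, zero_mul]
  have h2' : γ / (-2 * α) > (K - 1) * (K + 1) / (2 * K) + ((K - 1) / 2) * (β / α) ↔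
      0 < β * K * (K - 1) + α * (K - 1) * (K + 1) + K * γ := by
    have e : γ / (-2 * α) - ((K - 1) * (K + 1) / (2 * K) + ((K - 1) / 2) * (β / α))
        = (β * K * (K - 1) + α * (K - 1) * (K + 1) + K * γ) / (2 * K * (-α)) := by
      field_simp
      ring
    rw [gt_iff_lt, ← sub_pos, e, lt_div_iff₀ hc, zero_mul]
  have h3 : bDB α β γ k > 0 ↔ 0 < 2 * β + α * (K + 1) + K * γ := by
    have e : bDB α β γ k
        = (2 * β + α * (K + 1) + K * γ) / ((K + 1) * (K - 2)) := by
      unfold bDB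
      rw [← hKdef]
      field_simp
      ring
    rw [gt_iff_lt, e, lt_div_iff₀ hD, zero_mul]
  have h3' : γ / (-2 * α) > (K + 1) / (2 * K) + (1 / K) * (β / α) ↔
      0 < 2 * β + α * (K + 1) + K * γ := by
    have e : γ / (-2 * α) - ((K + 1) / (2 * K) + (1 / K) * (β / α))
        = (2 * β + α * (K + 1) + K * γ) / (2 * K * (-α)) := by
      field_simp
      ring
    rw [gt_iff_lt, ← sub_pos, e, lt_div_iff₀ hc, zero_mul]
  refine ⟨h1.trans h1'.symm, h2.trans h2'.symm, h3.trans h3'.symm, ?_⟩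
  intro hga hθ
  rw [div_lt_div_iff_of_pos_right hga, mul_lt_mul_iff_of_pos_right hθ, neg_lt_neg_iff]
  have : β + α < β + α + bDB α β γ k ↔ bDB α β γ k > 0 := by
    constructor <;> intro h <;> linarith
  exact this.trans (h3.trans h3'.symm)
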